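/- For the list V_1, …, V_k output by the division algorithm Δ applied to a reduced list Y_1, …, Y_t: (1) V_1, …, V_k is a reduced list of pairwise non-overlapping words; (2) every Y_i is a concatenation of words from V_1, …, V_k; (3) every V_j occurs as a factor in such a concatenation of some Y_i. -/

import Mathlib

/-- Two words overlap if `X = M·N` and `Y = N·L` where `N` and `M·L` are non-empty. -/
def Overlap {α : Type*} (X Y : List α) : Prop :=
  ∃ M N L : List α, X = M ++ N ∧ Y = N ++ L ∧ N ≠ [] ∧ M ++ L ≠ []

/-- One step of the division algorithm Δ: pick an overlapping pair `Y₁ = M·N`, `Y₂ = N·L`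
from the list, remove the pair, append `M, N, L`, remove empty words and duplicates. -/
def DeltaStep {α : Type*} [DecidableEq α] (l l' : List (List α)) : Prop :=
  ∃ Y1 Y2 M N L : List α, Y1 ∈ l ∧ Y2 ∈ l ∧
    Y1 = M ++ N ∧ Y2 = N ++ L ∧ N ≠ [] ∧ M ++ L ≠ [] ∧
    l' = ((((l.erase Y1).erase Y2) ++ [M, N, L]).filter (fun w => !w.isEmpty)).dedup

/-- A reduced list: all words non-empty and pairwise distinct. -/
def ReducedList {α : Type*} (l : List (List α)) : Prop :=
  (∀ w ∈ l, w ≠ []) ∧ l.Nodup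

lemma flatten_filter_pair {α : Type*} (a b : List α) :
    (([a,b].filter (fun u => !u.isEmpty)).flatten) = a ++ b := by
  rcases a with _|⟨x,a⟩ <;> rcases b with _|⟨y,b⟩ <;> simp

/-- Generic substitution lemma: given a replacement function `r` that sends each word of `l`
to a list of words of `l'` with the same flattening, any concatenation of words of `l`
can be rewritten as a concatenation of words of `l'`. -/
lemma subst_lemma {α : Type*} {l l' : List (List α)} (r : List α → List (List α))
    (hrf : ∀ w ∈ l, (r w).flatten = w) (hrm : ∀ w ∈ l, ∀ u ∈ r w, u ∈ l')
    (ws : List (List α)) (hws : ∀ w ∈ ws, w ∈ l) :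
    ∃ ws' : List (List α), (∀ u ∈ ws', u ∈ l') ∧ ws'.flatten = ws.flatten ∧
      ∀ w ∈ ws, ∀ u ∈ r w, u ∈ ws' := by
  induction ws with
  | nil => exact ⟨[], by simp, by simp, by simp⟩
  | cons w ws ih =>
    obtain ⟨ws', hmem, hflat, hcover⟩ := ih (fun x hx => hws x (List.mem_cons_of_mem _ hx))
    have hwl : w ∈ l := hws w List.mem_cons_self
    refine ⟨r w ++ ws', ?_, ?_, ?_⟩
    · intro u hu
      rcases List.mem_append.1 hu with h | h
      · exact hrm w hwl u h
      · exact hmem u h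
    · rw [List.flatten_append, hflat, hrf w hwl]; simp
    · intro x hx u hu
      rcases List.mem_cons.1 hx with rfl | hx
      · exact List.mem_append.2 (Or.inl hu)
      · exact List.mem_append.2 (Or.inr (hcover x hx u hu))

lemma step_inv {α : Type*} [DecidableEq α] {Y l l' : List (List α)}
    (hstep : DeltaStep l l')
    (h1 : ReducedList l)
    (h2 : ∀ y ∈ Y, ∃ ws : List (List α), (∀ w ∈ ws, w ∈ l) ∧ ws.flatten = y)
    (h3 : ∀ v ∈ l, ∃ y ∈ Y, ∃ ws : List (List α),
        (∀ w ∈ ws, w ∈ l) ∧ ws.flatten = y ∧ v ∈ ws) :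
    ReducedList l' ∧
    (∀ y ∈ Y, ∃ ws : List (List α), (∀ w ∈ ws, w ∈ l') ∧ ws.flatten = y) ∧
    (∀ v ∈ l', ∃ y ∈ Y, ∃ ws : List (List α),
        (∀ w ∈ ws, w ∈ l') ∧ ws.flatten = y ∧ v ∈ ws) := by
  obtain ⟨Y1, Y2, M, N, L, hY1, hY2, hE1, hE2, hN, hML, hl'⟩ := hstep
  have hmem' : ∀ w, w ∈ l' ↔ ((w ∈ (l.erase Y1).erase Y2 ∨ w = M ∨ w = N ∨ w = L) ∧ w ≠ []) := by
    intro w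
    have hb : ∀ u : List α, (!u.isEmpty) = true ↔ u ≠ [] := by
      intro u; cases u <;> simp
    simp only [hl', List.mem_dedup, List.mem_filter, List.mem_append, List.mem_cons,
      List.mem_singleton, List.not_mem_nil, or_false, hb]
  have hne' : ∀ w ∈ l', w ≠ [] := fun w hw => ((hmem' w).1 hw).2
  have hNl' : N ∈ l' := (hmem' N).2 ⟨Or.inr (Or.inr (Or.inl rfl)), hN⟩
  have hMl' : M ≠ [] → M ∈ l' := fun h => (hmem' M).2 ⟨Or.inr (Or.inl rfl), h⟩
  have hLl' : L ≠ [] → L ∈ l' := fun h => (hmem' L).2 ⟨Or.inr (Or.inr (Or.inr rfl)), h⟩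
  have hkeep : ∀ w ∈ l, w ≠ Y1 → w ≠ Y2 → w ∈ l' := by
    intro w hw h1' h2'
    exact (hmem' w).2 ⟨Or.inl ((List.mem_erase_of_ne h2').2 ((List.mem_erase_of_ne h1').2 hw)),
      h1.1 w hw⟩
  have hMNsub : ∀ u ∈ [M,N].filter (fun u => !u.isEmpty), u ∈ l' := by
    intro u hu
    rw [List.mem_filter] at hu
    obtain ⟨hu1, hu2⟩ := hu
    have hune : u ≠ [] := by simpa using hu2
    rcases List.mem_cons.1 hu1 with rfl | hu1
    · exact hMl' hune
    · rw [List.mem_singleton] at hu1; subst hu1; exact hNl'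
  have hNLsub : ∀ u ∈ [N,L].filter (fun u => !u.isEmpty), u ∈ l' := by
    intro u hu
    rw [List.mem_filter] at hu
    obtain ⟨hu1, hu2⟩ := hu
    have hune : u ≠ [] := by simpa using hu2
    rcases List.mem_cons.1 hu1 with rfl | hu1
    · exact hNl'
    · rw [List.mem_singleton] at hu1; subst hu1; exact hLl' hune
  -- replacement function preferring the Y1-decomposition
  set r1 : List α → List (List α) := fun w =>
    if w = Y1 then [M,N].filter (fun u => !u.isEmpty)
    else if w = Y2 then [N,L].filter (fun u => !u.isEmpty)
    else [w] with hr1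
  -- replacement function preferring the Y2-decomposition
  set r2 : List α → List (List α) := fun w =>
    if w = Y2 then [N,L].filter (fun u => !u.isEmpty)
    else if w = Y1 then [M,N].filter (fun u => !u.isEmpty)
    else [w] with hr2
  have hr1f : ∀ w ∈ l, (r1 w).flatten = w := by
    intro w hw
    by_cases e1 : w = Y1
    · simp only [hr1, if_pos e1, flatten_filter_pair]; rw [e1, hE1]
    · by_cases e2 : w = Y2
      · simp only [hr1, if_neg e1, if_pos e2, flatten_filter_pair]; rw [e2, hE2]
      · simp [hr1, e1, e2]
  have hr2f : ∀ w ∈ l, (r2 w).flatten = w := by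
    intro w hw
    by_cases e2 : w = Y2
    · simp only [hr2, if_pos e2, flatten_filter_pair]; rw [e2, hE2]
    · by_cases e1 : w = Y1
      · simp only [hr2, if_neg e2, if_pos e1, flatten_filter_pair]; rw [e1, hE1]
      · simp [hr2, e1, e2]
  have hr1m : ∀ w ∈ l, ∀ u ∈ r1 w, u ∈ l' := by
    intro w hw u hu
    by_cases e1 : w = Y1
    · rw [hr1] at hu; simp only [if_pos e1] at hu; exact hMNsub u hu
    · by_cases e2 : w = Y2
      · rw [hr1] at hu; simp only [if_neg e1, if_pos e2] at hu; exact hNLsub u hu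
      · rw [hr1] at hu; simp only [if_neg e1, if_neg e2, List.mem_singleton] at hu
        exact hu ▸ hkeep w hw e1 e2
  have hr2m : ∀ w ∈ l, ∀ u ∈ r2 w, u ∈ l' := by
    intro w hw u hu
    by_cases e2 : w = Y2
    · rw [hr2] at hu; simp only [if_pos e2] at hu; exact hNLsub u hu
    · by_cases e1 : w = Y1
      · rw [hr2] at hu; simp only [if_neg e2, if_pos e1] at hu; exact hMNsub u hu
      · rw [hr2] at hu; simp only [if_neg e2, if_neg e1, List.mem_singleton] at hu
        exact hu ▸ hkeep w hw e1 e2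
  refine ⟨⟨hne', by rw [hl']; exact List.nodup_dedup _⟩, ?_, ?_⟩
  · intro y hy
    obtain ⟨ws, hws, hflat⟩ := h2 y hy
    obtain ⟨ws', hmem, hflat', _⟩ := subst_lemma r1 hr1f hr1m ws hws
    exact ⟨ws', hmem, hflat'.trans hflat⟩
  · intro v hv
    have hvne : v ≠ [] := hne' v hv
    by_cases eL : v = L
    · -- use the Y2-preferring decomposition of some y containing Y2
      obtain ⟨y, hy, ws, hws, hflat, hvws⟩ := h3 Y2 hY2
      obtain ⟨ws', hmem, hflat', hcover⟩ := subst_lemma r2 hr2f hr2m ws hws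
      refine ⟨y, hy, ws', hmem, hflat'.trans hflat, ?_⟩
      have hvr : v ∈ r2 Y2 := by
        have he : r2 Y2 = [N,L].filter (fun u => !u.isEmpty) := by rw [hr2]; simp
        rw [he, List.mem_filter]
        subst eL
        exact ⟨by simp, by simpa using hvne⟩
      exact hcover Y2 hvws v hvr
    · by_cases eMN : v = M ∨ v = N
      · obtain ⟨y, hy, ws, hws, hflat, hvws⟩ := h3 Y1 hY1
        obtain ⟨ws', hmem, hflat', hcover⟩ := subst_lemma r1 hr1f hr1m ws hws
        refine ⟨y, hy, ws', hmem, hflat'.trans hflat, ?_⟩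
        have hvr : v ∈ r1 Y1 := by
          have he : r1 Y1 = [M,N].filter (fun u => !u.isEmpty) := by rw [hr1]; simp
          rw [he, List.mem_filter]
          refine ⟨?_, by simpa using hvne⟩
          rcases eMN with rfl | rfl <;> simp
        exact hcover Y1 hvws v hvr
      · -- v survives both erasures
        push_neg at eMN
        have hvl2 : v ∈ (l.erase Y1).erase Y2 := by
          rcases ((hmem' v).1 hv).1 with h | h | h | h
          · exact h
          · exact absurd h eMN.1
          · exact absurd h eMN.2
          · exact absurd h eL
        have hvl1 : v ∈ l.erase Y1 := List.mem_of_mem_erase hvl2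
        have hvl : v ∈ l := List.mem_of_mem_erase hvl1
        have hvY1 : v ≠ Y1 := by
          rintro rfl; exact h1.2.not_mem_erase hvl1
        have hvY2 : v ≠ Y2 := by
          rintro rfl; exact (h1.2.erase Y1).not_mem_erase hvl2
        obtain ⟨y, hy, ws, hws, hflat, hvws⟩ := h3 v hvl
        obtain ⟨ws', hmem, hflat', hcover⟩ := subst_lemma r1 hr1f hr1m ws hws
        refine ⟨y, hy, ws', hmem, hflat'.trans hflat, ?_⟩
        have hvr : v ∈ r1 v := by
          rw [hr1]; simp [hvY1, hvY2]
        exact hcover v hvws v hvr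

theorem stmt_4 {α : Type*} [DecidableEq α] (Y V : List (List α))
    (hY : ReducedList Y) (hrun : Relation.ReflTransGen DeltaStep Y V)
    (hterm : ∀ x ∈ V, ∀ y ∈ V, ¬ Overlap x y) :
    (ReducedList V ∧ ∀ x ∈ V, ∀ y ∈ V, ¬ Overlap x y) ∧
    (∀ y ∈ Y, ∃ ws : List (List α), (∀ w ∈ ws, w ∈ V) ∧ ws.flatten = y) ∧
    (∀ v ∈ V, ∃ y ∈ Y, ∃ ws : List (List α),
        (∀ w ∈ ws, w ∈ V) ∧ ws.flatten = y ∧ v ∈ ws) := by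
  have key : ReducedList V ∧
      (∀ y ∈ Y, ∃ ws : List (List α), (∀ w ∈ ws, w ∈ V) ∧ ws.flatten = y) ∧
      (∀ v ∈ V, ∃ y ∈ Y, ∃ ws : List (List α),
          (∀ w ∈ ws, w ∈ V) ∧ ws.flatten = y ∧ v ∈ ws) := by
    clear hterm
    induction hrun with
    | refl =>
      refine ⟨hY, fun y hy => ⟨[y], by simpa using hy, by simp⟩,
        fun v hv => ⟨v, hv, [v], by simpa using hv, by simp, by simp⟩⟩
    | tail _ hstep ih =>
      exact step_inv hstep ih.1 ih.2.1 ih.2.2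
  exact ⟨⟨key.1, hterm⟩, key.2.1, key.2.2⟩
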